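/- Let d1 > 0, d2 > 0, y⋆ > 0 with d1·d2 < 1/(4·y⋆²), KP ≥ 0, KI > 0, u0 ∈ ℝ, r := (1/2)·√(1 - 4·d1·d2·y⋆²), and let χ̄^u := ((1/(2·d1))·(1 - 2r), y⋆, (1 - d1·(1/(2·d1))·(1 - 2r) - u0·y⋆)/(KI·y⋆)) be the minimal-current equilibrium of the PI closed-loop vector field f. Then the Jacobian matrix ∇f(χ̄^u) has a real eigenvalue λ > 0. Consequently χ̄^u is unstable for all choices of the tuning gains. -/

import Mathlib

set_option maxHeartbeats 1000000 in
/-- the minimal-current equilibrium of the PI closed-loop system with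
d1 > 0 is unstable: the Jacobian has a real eigenvalue λ > 0, for all tuning gains. -/
theorem boost_pi_min_current_unstable
    (d1 d2 ystar KP KI u0 : ℝ) (hd1 : 0 < d1) (hd2 : 0 < d2) (hy : 0 < ystar)
    (hcond : d1 * d2 < 1 / (4 * ystar ^ 2)) (hKP : 0 ≤ KP) (hKI : 0 < KI)
    (r : ℝ) (hr : r = (1 / 2) * Real.sqrt (1 - 4 * d1 * d2 * ystar ^ 2))
    (f : ℝ × ℝ × ℝ → ℝ × ℝ × ℝ)
    (hf : ∀ χ : ℝ × ℝ × ℝ,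
      f χ = (-d1 * χ.1 + 1 - (u0 + KI * χ.2.2 + KP * (ystar - χ.2.1)) * χ.2.1,
             -d2 * χ.2.1 + (u0 + KI * χ.2.2 + KP * (ystar - χ.2.1)) * χ.1,
             ystar - χ.2.1))
    (χu : ℝ × ℝ × ℝ)
    (hχu : χu = ((1 / (2 * d1)) * (1 - 2 * r), ystar,
      (1 - d1 * ((1 / (2 * d1)) * (1 - 2 * r)) - u0 * ystar) / (KI * ystar))) :
    ∃ lam : ℝ, 0 < lam ∧ ∃ v : ℝ × ℝ × ℝ, v ≠ 0 ∧ fderiv ℝ f χu v = lam • v := by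
  have hy0 : ystar ≠ 0 := ne_of_gt hy
  have hd1' : d1 ≠ 0 := ne_of_gt hd1
  have hKI' : KI ≠ 0 := ne_of_gt hKI
  set x1 : ℝ := 1 / (2 * d1) * (1 - 2 * r) with hx1
  set ub : ℝ := (1 - d1 * x1) / ystar with hub
  have hrpos : 0 < r := by
    rw [hr]
    have h1 : 0 < 1 - 4 * d1 * d2 * ystar ^ 2 := by
      have h2 : 0 < 4 * ystar ^ 2 := by positivity
      rw [lt_div_iff₀ h2] at hcond
      nlinarith
    have := Real.sqrt_pos.mpr h1
    linarith
  have hd1x1 : d1 * x1 = (1 - 2 * r) / 2 := by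
    rw [hx1]; field_simp
  have hubys : ub * ystar = 1 - d1 * x1 := by
    rw [hub]; field_simp
  -- the characteristic cubic
  set q : ℝ → ℝ := fun l =>
    (l + d1) * (l ^ 2 + (d2 + KP * x1) * l + KI * x1)
      - ub * ((KP * ystar - ub) * l + KI * ystar) with hqdef
  have hq0 : q 0 = -(2 * KI * r) := by
    have h : q 0 = KI * (d1 * x1) - KI * (ub * ystar) := by
      simp only [hqdef]; ring
    rw [h, hubys, hd1x1]; ring
  have hq0neg : q 0 < 0 := by
    rw [hq0]
    have : 0 < 2 * KI * r := by positivity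
    linarith
  -- coefficients of the cubic
  set A : ℝ := d1 + d2 + KP * x1 with hA
  set B : ℝ := d1 * (d2 + KP * x1) + KI * x1 - ub * (KP * ystar - ub) with hB
  set C : ℝ := d1 * KI * x1 - ub * KI * ystar with hC
  have hqabc : ∀ l : ℝ, q l = l ^ 3 + A * l ^ 2 + B * l + C := by
    intro l
    simp only [hqdef, hA, hB, hC]; ring
  set M : ℝ := 1 + |A| + |B| + |C| with hM
  have hM1 : 1 ≤ M := by
    have := abs_nonneg A; have := abs_nonneg B; have := abs_nonneg C
    rw [hM]; linarith
  have hqM : 0 < q M := by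
    rw [hqabc M]
    have hAa := neg_abs_le A
    have hBa := neg_abs_le B
    have hCa := neg_abs_le C
    have hM0 : 0 < M := by linarith
    have hM2 : M ≤ M ^ 2 := by nlinarith
    nlinarith [sq_nonneg M, mul_le_mul_of_nonneg_left hM2 (abs_nonneg B),
      mul_le_mul_of_nonneg_left hM2 (abs_nonneg C),
      mul_pos (mul_pos hM0 hM0) hM0]
  -- a positive root of the cubic by IVT
  have hcont : Continuous q := by
    rw [hqdef]; fun_prop
  obtain ⟨lam, hlamIcc, hqlam⟩ :=
    intermediate_value_Icc (by linarith : (0:ℝ) ≤ M) hcont.continuousOn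
      ⟨le_of_lt hq0neg, le_of_lt hqM⟩
  have hlampos : 0 < lam := by
    rcases lt_or_eq_of_le hlamIcc.1 with h | h
    · exact h
    · exfalso; rw [← h] at hqlam; rw [hqlam] at hq0neg; exact absurd hq0neg (lt_irrefl 0)
  have hld1 : 0 < lam + d1 := by linarith
  have hld1' : lam + d1 ≠ 0 := ne_of_gt hld1
  set v1 : ℝ := ((KP * ystar - ub) * lam + KI * ystar) / (lam + d1) with hv1
  refine ⟨lam, hlampos, (v1, lam, (-1 : ℝ)), ?_, ?_⟩
  · intro h
    have h3 : (-1 : ℝ) = 0 := congrArg (fun p : ℝ × ℝ × ℝ => p.2.2) h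
    norm_num at h3
  · -- compute the derivative
    have hfe : f = fun χ : ℝ × ℝ × ℝ =>
        (-d1 * χ.1 + 1 - (u0 + KI * χ.2.2 + KP * (ystar - χ.2.1)) * χ.2.1,
         -d2 * χ.2.1 + (u0 + KI * χ.2.2 + KP * (ystar - χ.2.1)) * χ.1,
         ystar - χ.2.1) := funext hf
    subst hfe
    have hx' : HasFDerivAt (fun χ : ℝ × ℝ × ℝ => χ.1)
        (ContinuousLinearMap.fst ℝ ℝ (ℝ × ℝ)) χu := hasFDerivAt_fst
    have hy' : HasFDerivAt (fun χ : ℝ × ℝ × ℝ => χ.2.1)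
        ((ContinuousLinearMap.fst ℝ ℝ ℝ).comp (ContinuousLinearMap.snd ℝ ℝ (ℝ × ℝ))) χu :=
      hasFDerivAt_fst.comp χu hasFDerivAt_snd
    have hz' : HasFDerivAt (fun χ : ℝ × ℝ × ℝ => χ.2.2)
        ((ContinuousLinearMap.snd ℝ ℝ ℝ).comp (ContinuousLinearMap.snd ℝ ℝ (ℝ × ℝ))) χu :=
      hasFDerivAt_snd.comp χu hasFDerivAt_snd
    have hU := ((hz'.const_mul KI).const_add u0).add ((hy'.const_sub ystar).const_mul KP)
    have h1 := ((hx'.const_mul (-d1)).add_const (1 : ℝ)).sub (hU.mul hy')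
    have h2 := (hy'.const_mul (-d2)).add (hU.mul hx')
    have h3 := hy'.const_sub ystar
    have H := HasFDerivAt.prodMk h1 (HasFDerivAt.prodMk h2 h3)
    rw [(show HasFDerivAt (fun χ : ℝ × ℝ × ℝ =>
        (-d1 * χ.1 + 1 - (u0 + KI * χ.2.2 + KP * (ystar - χ.2.1)) * χ.2.1,
         -d2 * χ.2.1 + (u0 + KI * χ.2.2 + KP * (ystar - χ.2.1)) * χ.1,
         ystar - χ.2.1)) _ χu from H).fderiv]
    have hUe : u0 + KI * χu.2.2 + KP * (ystar - χu.2.1) = ub := by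
      rw [hχu, hub]
      simp only
      field_simp
      ring
    have hx1e : χu.1 = x1 := by rw [hχu]
    have hy1e : χu.2.1 = ystar := by rw [hχu]
    simp only [ContinuousLinearMap.prod_apply, ContinuousLinearMap.add_apply,
      ContinuousLinearMap.sub_apply, ContinuousLinearMap.smul_apply,
      ContinuousLinearMap.comp_apply, ContinuousLinearMap.coe_fst',
      ContinuousLinearMap.coe_snd', ContinuousLinearMap.zero_apply,
      ContinuousLinearMap.coe_smul', ContinuousLinearMap.neg_apply,
      Pi.smul_apply, smul_eq_mul, Pi.add_apply]
    rw [hUe, hx1e, hy1e]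
    have hqlam' : (lam + d1) * (lam ^ 2 + (d2 + KP * x1) * lam + KI * x1)
        - ub * ((KP * ystar - ub) * lam + KI * ystar) = 0 := hqlam
    have hv1e : (lam + d1) * v1 = (KP * ystar - ub) * lam + KI * ystar := by
      rw [hv1]; field_simp
    clear_value x1 ub v1
    simp only [Prod.smul_mk, smul_eq_mul, Prod.mk.injEq]
    refine ⟨?_, ?_, ?_⟩
    · linear_combination -hv1e
    · have hubv1 : ub * v1 = lam ^ 2 + (d2 + KP * x1) * lam + KI * x1 :=
        mul_left_cancel₀ hld1' (by linear_combination ub * hv1e - hqlam')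
      linear_combination hubv1
    · ring
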